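/- For every k ≥ 1 and m ≥ 1, the k-limited propagating 0L system over {a,b,c} with axiom c and rules {a→a, a→bb, b→b, c→a^{km}}, where each step rewrites exactly min(k, |w|_x) occurrences of each letter x (choosing a rule for each rewritten occurrence), generates exactly the language L_m = {c} ∪ {x₁⋯x_{km} | x_i ∈ {a, bb}}. -/

import Mathlib

/-- One k-limited derivation step: for each letter x, exactly min(k, |v|_x) occurrences
of x in v are rewritten, each by some rule of R with left side x; the remaining
occurrences stay unchanged. -/
def klStep {V : Type*} [DecidableEq V] (k : ℕ) (R : Set (V × List V)) (v w : List V) : Prop :=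
  ∃ (S : Finset (Fin v.length)) (f : Fin v.length → List V),
    (∀ x : V, (S.filter (fun i => v.get i = x)).card = min k (v.count x)) ∧
    (∀ i ∈ S, (v.get i, f i) ∈ R) ∧
    (∀ i, i ∉ S → f i = [v.get i]) ∧
    w = (List.ofFn f).flatten

/-- Deterministic k-limited step with rule function P. -/
def detStep {V : Type*} [DecidableEq V] (k : ℕ) (P : V → List V) : List V → List V → Prop :=
  klStep k {p | p.2 = P p.1}

/-- The language generated from axiom ω by a step relation. -/
def lang {V : Type*} (step : List V → List V → Prop) (ω : List V) : Set (List V) :=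
  {w | Relation.ReflTransGen step ω w}

inductive V3 : Type
  | a | b | c
deriving DecidableEq

instance instFintypeV3 : Fintype V3 where
  elems := {V3.a, V3.b, V3.c}
  complete := by intro x; cases x <;> simp

open V3

/-- The rule set {a→a, a→bb, b→b, c→a^{km}}. -/
def R10 (k m : ℕ) : Set (V3 × List V3) :=
  {(a, [a]), (a, [b, b]), (b, [b]), (c, List.replicate (k * m) a)}

def Lm (k m : ℕ) : Set (List V3) :=
  {[c]} ∪ {z | ∃ bs : List (List V3),
    bs.length = k * m ∧ (∀ x ∈ bs, x = [a] ∨ x = [b, b]) ∧ z = bs.flatten}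

/- ### auxiliary lemmas -/

lemma card_filter_univ_eq_count {α} [DecidableEq α] (v : List α) (x : α) :
    (Finset.univ.filter (fun i : Fin v.length => v.get i = x)).card = v.count x := by
  conv_rhs => rw [← List.map_get_finRange v]
  rw [List.count, List.countP_map]
  rw [Fin.univ_def]
  simp only [Finset.filter, Finset.card, Multiset.filter_coe, Multiset.coe_card,
    ← List.countP_eq_length_filter]
  apply List.countP_congr
  intro i _
  simp [Function.comp, List.get_eq_getElem]

lemma mem_R10_id {k m : ℕ} {x : V3} (hx : x ≠ c) : (x, ([x] : List V3)) ∈ R10 k m := by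
  cases x <;> simp_all [R10]

/-- Lemma A: a step can be built from a set `D` of "really rewritten" positions. -/
lemma klStep_of_subset (k m : ℕ) (v : List V3) (hc : c ∉ v)
    (D : Finset (Fin v.length)) (g : Fin v.length → List V3)
    (hD : ∀ i ∈ D, (v.get i, g i) ∈ R10 k m)
    (hcard : ∀ x : V3, (D.filter (fun i => v.get i = x)).card ≤ min k (v.count x))
    (hg : ∀ i ∉ D, g i = [v.get i]) :
    klStep k (R10 k m) v (List.ofFn g).flatten := by
  have key : ∀ x : V3, ∃ T : Finset (Fin v.length),
      D.filter (fun i => v.get i = x) ⊆ T ∧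
      T ⊆ Finset.univ.filter (fun i => v.get i = x) ∧
      T.card = min k (v.count x) := by
    intro x
    refine Finset.exists_subsuperset_card_eq ?_ (hcard x) ?_
    · intro i hi
      simp only [Finset.mem_filter] at hi ⊢
      exact ⟨Finset.mem_univ _, hi.2⟩
    · rw [card_filter_univ_eq_count]
      exact min_le_right _ _
  choose T hT1 hT2 hT3 using key
  have hTget : ∀ x i, i ∈ T x → v.get i = x := by
    intro x i hi
    have := hT2 x hi
    simpa using this
  refine ⟨Finset.univ.biUnion T, g, ?_, ?_, ?_, rfl⟩
  · intro x
    have : (Finset.univ.biUnion T).filter (fun i => v.get i = x) = T x := by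
      ext i
      simp only [Finset.mem_filter, Finset.mem_biUnion, Finset.mem_univ, true_and]
      constructor
      · rintro ⟨⟨y, hy⟩, hx⟩
        have := hTget y i hy
        rw [this] at hx
        rwa [hx] at hy
      · intro hi
        exact ⟨⟨x, hi⟩, hTget x i hi⟩
    rw [this, hT3]
  · intro i hi
    by_cases hiD : i ∈ D
    · exact hD i hiD
    · rw [hg i hiD]
      refine mem_R10_id ?_
      intro hcon
      exact hc (hcon ▸ (v.get_mem i))
  · intro i hi
    apply hg
    intro hiD
    apply hi
    simp only [Finset.mem_biUnion, Finset.mem_univ, true_and]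
    exact ⟨v.get i, hT1 _ (Finset.mem_filter.mpr ⟨hiD, rfl⟩)⟩

lemma flatten_ofFn_singleton {α : Type*} (w : List α) :
    (List.ofFn (fun i => [w.get i])).flatten = w := by
  induction w with
  | nil => simp
  | cons x w ih =>
    rw [List.ofFn_succ]
    have htail : (fun i : Fin w.length => [(x :: w).get i.succ]) = fun i => [w.get i] := by
      funext i
      simp
    simp only [List.flatten_cons, htail, ih]
    rfl

lemma flatten_ofFn_update {α : Type*} :
    ∀ (v : List α) (n : ℕ) (hn : n < v.length) (L : List α),
    (List.ofFn (Function.update (fun i => [v.get i]) ⟨n, hn⟩ L)).flatten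
      = v.take n ++ L ++ v.drop (n + 1)
  | x :: v', 0, hn, L => by
      rw [List.ofFn_succ]
      have h0 : Function.update (fun i => [(x :: v').get i]) (⟨0, hn⟩ : Fin (v'.length + 1)) L
          (0 : Fin (v'.length + 1)) = L := by
        have h00 : (0 : Fin (v'.length + 1)) = ⟨0, hn⟩ := rfl
        rw [h00, Function.update_self]
      have htail : (fun i : Fin v'.length =>
          Function.update (fun i => [(x :: v').get i]) (⟨0, hn⟩ : Fin (v'.length + 1)) L i.succ)
          = fun i : Fin v'.length => [v'.get i] := by
        funext i
        have hne : i.succ ≠ (⟨0, hn⟩ : Fin (v'.length + 1)) := by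
          intro h
          exact Nat.succ_ne_zero i.1 (congrArg Fin.val h)
        rw [Function.update_of_ne hne]
        simp
      rw [h0, htail, List.flatten_cons, flatten_ofFn_singleton]
      simp
  | x :: v', n + 1, hn, L => by
      rw [List.ofFn_succ]
      have hne : (0 : Fin (v'.length + 1)) ≠ ⟨n + 1, hn⟩ := by
        intro h
        simpa using congrArg Fin.val h
      have h0 : Function.update (fun i => [(x :: v').get i]) (⟨n + 1, hn⟩ : Fin (v'.length + 1)) L
          (0 : Fin (v'.length + 1)) = [x] := by
        rw [Function.update_of_ne hne]
        rfl
      have hn' : n < v'.length := Nat.lt_of_succ_lt_succ hn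
      have htail : (fun i : Fin v'.length =>
          Function.update (fun i => [(x :: v').get i]) (⟨n + 1, hn⟩ : Fin (v'.length + 1)) L i.succ)
          = Function.update (fun i : Fin v'.length => [v'.get i]) ⟨n, hn'⟩ L := by
        funext i
        by_cases hi : i = ⟨n, hn'⟩
        · subst hi
          have h1 : (⟨n, hn'⟩ : Fin v'.length).succ = (⟨n + 1, hn⟩ : Fin (v'.length + 1)) := rfl
          rw [h1, Function.update_self, Function.update_self]
        · have h1 : i.succ ≠ (⟨n + 1, hn⟩ : Fin (v'.length + 1)) := by
            intro h
            apply hi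
            apply Fin.succ_injective
            rw [h]
            rfl
          rw [Function.update_of_ne h1, Function.update_of_ne hi]
          simp
      rw [h0, htail]
      have ih := flatten_ofFn_update v' n hn' L
      simp only [List.flatten_cons, ih]
      simp

/-- One step turning the distinguished `a` into `bb`. -/
lemma step_single {k m : ℕ} (hk : 1 ≤ k) (u t : List V3)
    (hu : c ∉ u) (ht : c ∉ t) :
    klStep k (R10 k m) (u ++ a :: t) (u ++ b :: b :: t) := by
  set v := u ++ a :: t with hv
  have hnlt : u.length < v.length := by simp [hv]
  have hgetn : v.get ⟨u.length, hnlt⟩ = a := by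
    simp [hv, List.get_eq_getElem, List.getElem_append_right (Nat.le_refl u.length)]
  have hc : c ∉ v := by
    simp only [hv, List.mem_append, List.mem_cons]
    rintro (h | h | h) <;> simp_all
  have hstep := klStep_of_subset k m v hc {⟨u.length, hnlt⟩}
      (Function.update (fun i => [v.get i]) ⟨u.length, hnlt⟩ [b, b]) ?_ ?_ ?_
  · rw [flatten_ofFn_update] at hstep
    have htake : v.take u.length = u := by simp [hv]
    have hdrop : v.drop (u.length + 1) = t := by
      simp [hv, List.drop_append]
    rw [htake, hdrop] at hstep
    simpa using hstep
  · intro i hi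
    simp only [Finset.mem_singleton] at hi
    subst hi
    rw [Function.update_self, hgetn]
    simp [R10]
  · intro x
    by_cases hx : x = a
    · subst hx
      have hfil : ({⟨u.length, hnlt⟩} : Finset (Fin v.length)).filter (fun i => v.get i = a)
          = {⟨u.length, hnlt⟩} := by
        apply Finset.filter_true_of_mem
        intro i hi
        simp only [Finset.mem_singleton] at hi
        subst hi
        exact hgetn
      rw [hfil, Finset.card_singleton]
      have hmem : a ∈ v := by simp [hv]
      have h1 : 1 ≤ v.count a := List.count_pos_iff.mpr hmem
      exact le_min hk h1
    · have hfil : ({⟨u.length, hnlt⟩} : Finset (Fin v.length)).filter (fun i => v.get i = x)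
          = ∅ := by
        apply Finset.filter_false_of_mem
        intro i hi
        simp only [Finset.mem_singleton] at hi
        subst hi
        rw [hgetn]
        exact fun h => hx h.symm
      rw [hfil]
      simp
  · intro i hi
    simp only [Finset.mem_singleton] at hi
    rw [Function.update_of_ne hi]

/-- The first step `[c] → a^{km}`. -/
lemma step_c {k m : ℕ} (hk : 1 ≤ k) :
    klStep k (R10 k m) [c] (List.replicate (k * m) a) := by
  refine ⟨Finset.univ, fun _ => List.replicate (k * m) a, ?_, ?_, ?_, ?_⟩
  · intro x
    cases x
    · simp [Finset.filter_false_of_mem, List.get]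
    · simp [Finset.filter_false_of_mem, List.get]
    · have : (Finset.univ : Finset (Fin 1)).filter (fun i => ([c] : List V3).get i = c)
          = Finset.univ := by
        apply Finset.filter_true_of_mem
        intro i _
        fin_cases i
        rfl
      rw [this]
      simp [hk]
  · intro i _
    fin_cases i
    simp [R10, List.get]
  · intro i hi
    exact absurd (Finset.mem_univ i) hi
  · simp

/-- Completeness chain. -/
lemma chain {k m : ℕ} (hk : 1 ≤ k) :
    ∀ (s : List (List V3)) (p : List V3), c ∉ p →
      (∀ x ∈ s, x = [a] ∨ x = [b, b]) →
      Relation.ReflTransGen (klStep k (R10 k m))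
        (p ++ List.replicate s.length a) (p ++ s.flatten) := by
  intro s
  induction s with
  | nil => intro p _ _; simpa using Relation.ReflTransGen.refl
  | cons blk s' ih =>
    intro p hp hs
    have hblk := hs blk (by simp)
    have hs' : ∀ x ∈ s', x = [a] ∨ x = [b, b] := fun x hx => hs x (by simp [hx])
    have hca : c ∉ List.replicate s'.length a := by
      intro h
      have := List.eq_of_mem_replicate h
      simp at this
    rcases hblk with h | h
    · subst h
      have := ih (p ++ [a]) (by simp [hp]) hs'
      simpa [List.replicate_succ, List.append_assoc] using this
    · subst h
      have hstep : klStep k (R10 k m)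
          (p ++ a :: List.replicate s'.length a)
          (p ++ b :: b :: List.replicate s'.length a) :=
        step_single hk p (List.replicate s'.length a) hp hca
      have hrest := ih (p ++ [b, b]) (by simp [hp]) hs'
      refine Relation.ReflTransGen.head (b := p ++ b :: b :: List.replicate s'.length a) ?_ ?_
      · simpa [List.replicate_succ] using hstep
      · simpa [List.append_assoc] using hrest

lemma flatten_replicate_singleton (n : ℕ) :
    (List.replicate n ([a] : List V3)).flatten = List.replicate n a := by
  induction n with
  | zero => simp
  | succ n ih => simp [List.replicate_succ, ih]

lemma c_not_mem_flatten {bs : List (List V3)} (hbs : ∀ x ∈ bs, x = [a] ∨ x = [b, b]) :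
    c ∉ bs.flatten := by
  intro h
  rw [List.mem_flatten] at h
  obtain ⟨blk, hblk, hcblk⟩ := h
  rcases hbs blk hblk with h | h <;> simp [h] at hcblk

/-- Soundness pointwise-to-blocks lemma. -/
lemma blocks_of_pointwise :
    ∀ (bs : List (List V3)) (gs : List (List V3)),
      (∀ x ∈ bs, x = [a] ∨ x = [b, b]) →
      gs.length = bs.flatten.length →
      (∀ (i : ℕ) (h : i < bs.flatten.length) (h' : i < gs.length),
        (bs.flatten[i] = a → gs[i] = [a] ∨ gs[i] = [b, b]) ∧
        (bs.flatten[i] = b → gs[i] = [b])) →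
      ∃ bs' : List (List V3), bs'.length = bs.length ∧
        (∀ x ∈ bs', x = [a] ∨ x = [b, b]) ∧ gs.flatten = bs'.flatten := by
  intro bs
  induction bs with
  | nil =>
    intro gs _ hlen _
    simp only [List.flatten_nil, List.length_nil] at hlen
    rw [List.length_eq_zero_iff] at hlen
    exact ⟨[], by simp, by simp, by simp [hlen]⟩
  | cons blk bs₂ ih =>
    intro gs hbs hlen H
    have hblk := hbs blk (by simp)
    have hbs₂ : ∀ x ∈ bs₂, x = [a] ∨ x = [b, b] := fun x hx => hbs x (by simp [hx])
    rcases hblk with h | h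
    · subst h
      have hflat : ([a] :: bs₂).flatten = a :: bs₂.flatten := by simp
      rw [hflat] at hlen H
      match gs, hlen with
      | g₀ :: gs₂, hlen =>
        have hlen₂ : gs₂.length = bs₂.flatten.length := by simpa using hlen
        have h₀ := (H 0 (by simp) (by simp)).1 (by simp)
        have H₂ : ∀ (i : ℕ) (h : i < bs₂.flatten.length) (h' : i < gs₂.length),
            (bs₂.flatten[i] = a → gs₂[i] = [a] ∨ gs₂[i] = [b, b]) ∧
            (bs₂.flatten[i] = b → gs₂[i] = [b]) := by
          intro i hi hi'
          have := H (i + 1) (by simpa using Nat.succ_lt_succ hi) (by simpa using Nat.succ_lt_succ hi')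
          simpa using this
        obtain ⟨bs₂', hl, hok, hfl⟩ := ih gs₂ hbs₂ hlen₂ H₂
        refine ⟨g₀ :: bs₂', by simp [hl], ?_, by simp [hfl]⟩
        intro x hx
        rcases List.mem_cons.mp hx with h | h
        · subst h; exact h₀
        · exact hok x h
    · subst h
      have hflat : ([b, b] :: bs₂).flatten = b :: b :: bs₂.flatten := by simp
      rw [hflat] at hlen H
      match gs, hlen with
      | g₀ :: g₁ :: gs₂, hlen =>
        have hlen₂ : gs₂.length = bs₂.flatten.length := by simpa using hlen
        have h₀ := (H 0 (by simp) (by simp)).2 (by simp)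
        have h₁ := (H 1 (by simp) (by simp)).2 (by simp)
        have H₂ : ∀ (i : ℕ) (h : i < bs₂.flatten.length) (h' : i < gs₂.length),
            (bs₂.flatten[i] = a → gs₂[i] = [a] ∨ gs₂[i] = [b, b]) ∧
            (bs₂.flatten[i] = b → gs₂[i] = [b]) := by
          intro i hi hi'
          have := H (i + 2) (by simpa using Nat.succ_lt_succ (Nat.succ_lt_succ hi))
            (by simpa using Nat.succ_lt_succ (Nat.succ_lt_succ hi'))
          simpa using this
        obtain ⟨bs₂', hl, hok, hfl⟩ := ih gs₂ hbs₂ hlen₂ H₂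
        refine ⟨[b, b] :: bs₂', by simp [hl], ?_, ?_⟩
        · intro x hx
          rcases List.mem_cons.mp hx with h | h
          · subst h; right; rfl
          · exact hok x h
        · simp only [List.getElem_cons_zero] at h₀
          have h₁' : g₁ = [b] := by simpa using h₁
          simp [h₀, h₁', hfl]

/-- One step preserves block words. -/
lemma step_preserves {k m : ℕ} {v w : List V3} (hv : v ∈ Lm k m) (hk : 1 ≤ k) (hm : 1 ≤ m)
    (hstep : klStep k (R10 k m) v w) : w ∈ Lm k m := by
  obtain ⟨S, f, hcount, hrule, hid, hw⟩ := hstep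
  rcases hv with hv | ⟨bs, hlen, hok, hvflat⟩
  · -- v = [c]
    simp only [Set.mem_singleton_iff] at hv
    subst hv
    have h0mem : (⟨0, by simp⟩ : Fin ([c] : List V3).length) ∈ S := by
      have hc := hcount c
      have : min k (([c] : List V3).count c) = 1 := by
        simp [hk, Nat.min_eq_right]
      rw [this] at hc
      have hne : (S.filter (fun i => ([c] : List V3).get i = c)).Nonempty := by
        rw [← Finset.card_pos, hc]; norm_num
      obtain ⟨i, hi⟩ := hne
      have hiS := Finset.mem_filter.mp hi |>.1
      have : i = ⟨0, by simp⟩ := Fin.ext (Nat.lt_one_iff.mp (by simpa using i.isLt))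
      rwa [this] at hiS
    have hr := hrule _ h0mem
    have hgetc : ([c] : List V3).get ⟨0, by simp⟩ = c := rfl
    rw [hgetc] at hr
    have hf : f ⟨0, by simp⟩ = List.replicate (k * m) a := by
      simp only [R10, Set.mem_insert_iff, Set.mem_singleton_iff, Prod.mk.injEq] at hr
      rcases hr with ⟨h, _⟩ | ⟨h, _⟩ | ⟨h, _⟩ | ⟨_, h⟩ <;> first | exact h | exact absurd h (by simp)
    right
    refine ⟨List.replicate (k * m) [a], by simp, ?_, ?_⟩
    · intro x hx
      left
      exact List.eq_of_mem_replicate hx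
    · rw [hw, flatten_replicate_singleton]
      have : List.ofFn f = [f ⟨0, by simp⟩] := by
        rw [List.ofFn_succ]
        simp
      rw [this, hf]
      simp
  · -- v is a block word
    subst hvflat
    have hcv : c ∉ bs.flatten := c_not_mem_flatten hok
    have hpt : ∀ (i : ℕ) (h : i < bs.flatten.length) (h' : i < (List.ofFn f).length),
        (bs.flatten[i] = a → (List.ofFn f)[i] = [a] ∨ (List.ofFn f)[i] = [b, b]) ∧
        (bs.flatten[i] = b → (List.ofFn f)[i] = [b]) := by
      intro i h h'
      have hgf : (List.ofFn f)[i] = f ⟨i, by simpa using h'⟩ := List.getElem_ofFn h'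
      have hgv : bs.flatten[i] = bs.flatten.get ⟨i, h⟩ := rfl
      by_cases hiS : (⟨i, by simpa using h'⟩ : Fin bs.flatten.length) ∈ S
      · have hr := hrule _ hiS
        simp only [R10, Set.mem_insert_iff, Set.mem_singleton_iff, Prod.mk.injEq] at hr
        constructor
        · intro ha
          rw [hgf]
          rw [hgv] at ha
          rcases hr with ⟨_, h2⟩ | ⟨_, h2⟩ | ⟨h1, _⟩ | ⟨h1, _⟩
          · left; exact h2
          · right; exact h2
          · rw [ha] at h1; exact absurd h1 (by simp)
          · rw [ha] at h1; exact absurd h1 (by simp)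
        · intro hb
          rw [hgf]
          rw [hgv] at hb
          rcases hr with ⟨h1, _⟩ | ⟨h1, _⟩ | ⟨_, h2⟩ | ⟨h1, _⟩
          · rw [hb] at h1; exact absurd h1 (by simp)
          · rw [hb] at h1; exact absurd h1 (by simp)
          · exact h2
          · rw [hb] at h1; exact absurd h1 (by simp)
      · have hfi := hid _ hiS
        constructor
        · intro ha
          left
          rw [hgf, hfi, ← hgv, ha]
        · intro hb
          rw [hgf, hfi, ← hgv, hb]
    obtain ⟨bs', hl, hok', hfl⟩ := blocks_of_pointwise bs (List.ofFn f) hok (by simp) hpt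
    right
    exact ⟨bs', by rw [hl, hlen], hok', by rw [hw, hfl]⟩

/-- The kℓP0L system with axiom c and rules {a→a, a→bb, b→b, c→a^{km}} generates L_m. -/
theorem stmt10 (k m : ℕ) (hk : 1 ≤ k) (hm : 1 ≤ m) :
    lang (klStep k (R10 k m)) [c] = Lm k m := by
  ext z
  constructor
  · intro hz
    have : ∀ w, Relation.ReflTransGen (klStep k (R10 k m)) [c] w → w ∈ Lm k m := by
      intro w hw
      induction hw with
      | refl => left; rfl
      | tail _ hstep ih => exact step_preserves ih hk hm hstep
    exact this z hz
  · rintro (hz | ⟨bs, hlen, hok, hzflat⟩)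
    · simp only [Set.mem_singleton_iff] at hz
      subst hz
      exact Relation.ReflTransGen.refl
    · subst hzflat
      refine Relation.ReflTransGen.head (step_c hk) ?_
      have := chain (k := k) (m := m) hk bs [] (by simp) hok
      simpa [hlen] using this
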